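/- One-pass asynchronous convergence: suppose the hub domination condition holds, i.e., hub_weight(v) ≥ rest_weight(v) for every vertex v ≠ g. Let sched be any finite list of vertices that contains every non-hub vertex at least once, and let s' be the state obtained from an arbitrary initial state s by asynchronously updating the vertices in the order given by sched. Then s'(v) = Glory for every vertex v ≠ g. -/

import Mathlib

open Finset

inductive Vote where
  | Glory
  | Gnash
deriving DecidableEq

variable {V : Type*} [Fintype V] [DecidableEq V]

/-- Influence of the hub `g` on `v`. -/
def hubWeight (w : V → V → NNReal) (g v : V) : NNReal := w g v

/-- Total influence of all non-hub vertices on `v`. -/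
def restWeight (w : V → V → NNReal) (g v : V) : NNReal :=
  ∑ u ∈ Finset.univ.filter (fun u => u ≠ g), w u v

/-- The hub-forced state: agrees with `s` off the hub and is `Glory` at the hub. -/
def forceG (g : V) (s : V → Vote) : V → Vote :=
  fun u => if u = g then Vote.Glory else s u

/-- Weighted score of opinion `X` at vertex `v` in state `s`. -/
def score (w : V → V → NNReal) (X : Vote) (s : V → Vote) (v : V) : NNReal :=
  ∑ u, w u v * (if s u = X then 1 else 0)

/-- Synchronous update rule. -/
noncomputable def nextHeaven (w : V → V → NNReal) (g : V) (s : V → Vote) (v : V) : Vote :=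
  if v = g then Vote.Glory
  else if score w Vote.Glory (forceG g s) v < score w Vote.Gnash (forceG g s) v then
    Vote.Gnash
  else Vote.Glory

/-- τ-biased synchronous update rule. -/
noncomputable def nextHeavenTau (w : V → V → NNReal) (g : V) (τ : V → NNReal) (s : V → Vote) (v : V) : Vote :=
  if v = g then Vote.Glory
  else if score w Vote.Glory (forceG g s) v + τ v < score w Vote.Gnash (forceG g s) v then
    Vote.Gnash
  else Vote.Glory

/-- The state assigning `Gnash` to every vertex. -/
def allGnash : V → Vote := fun _ => Vote.Gnash

/-- The state assigning `Glory` to every vertex. -/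
def allGlory : V → Vote := fun _ => Vote.Glory

/-- Asynchronous update at a single vertex. -/
noncomputable def asyncStep (w : V → V → NNReal) (g : V) (s : V → Vote) (u : V) : V → Vote :=
  Function.update s u (nextHeaven w g s u)

theorem async_one_pass (w : V → V → NNReal) (g : V)
    (hdom : ∀ v ≠ g, hubWeight w g v ≥ restWeight w g v)
    (sched : List V) (hsched : ∀ v ≠ g, v ∈ sched) (s : V → Vote) :
    ∀ v ≠ g, (sched.foldl (asyncStep w g) s) v = Vote.Glory := by
  have hnext : ∀ (s : V → Vote) (v : V), v ≠ g → nextHeaven w g s v = Vote.Glory := by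
    intro s v hv
    unfold nextHeaven
    rw [if_neg hv, if_neg]
    push_neg
    have h1 : score w Vote.Gnash (forceG g s) v ≤ restWeight w g v := by
      unfold score restWeight
      rw [← Finset.sum_filter_add_sum_filter_not Finset.univ (fun u => u ≠ g)]
      have h2 : ∑ u ∈ Finset.univ.filter (fun u => ¬ u ≠ g),
          w u v * (if forceG g s u = Vote.Gnash then 1 else 0) = 0 := by
        apply Finset.sum_eq_zero
        intro u hu
        simp only [Finset.mem_filter, not_not] at hu
        simp [forceG, hu.2]
      rw [h2, add_zero]
      apply Finset.sum_le_sum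
      intro u _
      split <;> simp
    have h2 : hubWeight w g v ≤ score w Vote.Glory (forceG g s) v := by
      unfold score
      calc hubWeight w g v = w g v * (if forceG g s g = Vote.Glory then 1 else 0) := by
            simp [hubWeight, forceG]
        _ ≤ _ := Finset.single_le_sum (f := fun u => w u v * (if forceG g s u = Vote.Glory then 1 else 0)) (fun u _ => zero_le) (Finset.mem_univ g)
    exact le_trans (le_trans h1 (hdom v hv)) h2
  have hpres : ∀ (l : List V) (s : V → Vote) (v : V), v ∉ l →
      (l.foldl (asyncStep w g) s) v = s v := by
    intro l
    induction l with
    | nil => intro s v _; rfl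
    | cons a rest ih =>
      intro s v hv
      simp only [List.foldl_cons]
      rw [ih _ _ (fun h => hv (List.mem_cons_of_mem _ h))]
      have hne : v ≠ a := fun h => hv (h ▸ List.mem_cons_self)
      simp [asyncStep, Function.update_of_ne hne]
  have key : ∀ (l : List V) (s : V → Vote) (v : V), v ≠ g → v ∈ l →
      (l.foldl (asyncStep w g) s) v = Vote.Glory := by
    intro l
    induction l with
    | nil => intro s v _ h; exact absurd h List.not_mem_nil
    | cons a rest ih =>
      intro s v hv hmem
      simp only [List.foldl_cons]
      by_cases hr : v ∈ rest
      · exact ih _ v hv hr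
      · have hva : v = a := by
          rcases List.mem_cons.mp hmem with h | h
          · exact h
          · exact absurd h hr
        rw [hpres rest _ v hr]
        subst hva
        simp [asyncStep, hnext s v hv]
  intro v hv
  exact key sched s v hv (hsched v hv)
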